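/- Let H be a bipartite graph on X ∪ Y, fix distinct s, t ∈ X, and suppose M_1 is a matching of H - {x, y} saturating X \ {x, y} and M_2 is a matching of H - {w, z} saturating X \ {w, z}, where x, y, w, z ∈ X are distinct. Then at least one of the pairs {x, w}, {x, z}, {y, w}, {y, z} is 'exposable', i.e., H minus that pair contains a matching saturating the remaining vertices of X. -/

import Mathlib

/-- In a bipartite graph `H` on `X ∪ Y`, the pair `{s, t} ⊆ X` is *exposable* if
`H - {s, t}` has a matching saturating `X \ {s, t}`. -/
def Exposable {X Y : Type*} (H : Finset (X × Y)) (s t : X) : Prop :=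
  ∃ f : X → Y, Set.InjOn f {x : X | x ≠ s ∧ x ≠ t} ∧
    ∀ x : X, x ≠ s → x ≠ t → (x, f x) ∈ H

/-- Auxiliary: if the alternating path starting from `w` (alternating between the
matching `f` avoiding `{x, y}` and the matching `g` avoiding `{w, z}`) never reaches `y`,
then switching the matching `g` along this path yields a matching avoiding `{x, z}`. -/
theorem exposable_aux {X Y : Type*} (H : Finset (X × Y)) (x y w z : X) (f g : X → Y)
    (hxw : x ≠ w)
    (finj : Set.InjOn f {u : X | u ≠ x ∧ u ≠ y})
    (fedge : ∀ u : X, u ≠ x → u ≠ y → (u, f u) ∈ H)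
    (ginj : Set.InjOn g {u : X | u ≠ w ∧ u ≠ z})
    (gedge : ∀ u : X, u ≠ w → u ≠ z → (u, g u) ∈ H)
    (hy : ¬ Relation.ReflTransGen
      (fun u v : X => (u ≠ x ∧ u ≠ y) ∧ v ≠ w ∧ v ≠ z ∧ g v = f u) w y) :
    Exposable H x z := by
  classical
  set R : X → X → Prop :=
    fun u v : X => (u ≠ x ∧ u ≠ y) ∧ v ≠ w ∧ v ≠ z ∧ g v = f u with hRdef
  set S : Set X := {u : X | Relation.ReflTransGen R w u ∧ u ≠ x} with hSdef
  -- basic facts about S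
  have hSx : ∀ u ∈ S, u ≠ x := fun u hu => hu.2
  have hSy : ∀ u ∈ S, u ≠ y := by
    intro u hu h
    rw [h] at hu
    exact hy hu.1
  have hwS : w ∈ S := ⟨Relation.ReflTransGen.refl, fun h => hxw h.symm⟩
  have hnotS : ∀ u : X, u ∉ S → u ≠ x → ¬ Relation.ReflTransGen R w u := by
    intro u hu hux hr
    exact hu ⟨hr, hux⟩
  have hnotSw : ∀ u : X, u ∉ S → u ≠ x → u ≠ w := by
    intro u hu hux h
    rw [h] at hu
    exact hu hwS
  refine ⟨fun u => if u ∈ S then f u else g u, ?_, ?_⟩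
  · intro u hu v hv heq
    simp only [Set.mem_setOf_eq] at hu hv
    by_cases huS : u ∈ S <;> by_cases hvS : v ∈ S <;>
      simp only [huS, hvS, if_pos, if_neg, if_true, if_false] at heq
    · exact finj ⟨hSx u huS, hSy u huS⟩ ⟨hSx v hvS, hSy v hvS⟩ heq
    · -- u ∈ S, v ∉ S : then R u v, so v reachable, contradiction
      exfalso
      have hRuv : R u v :=
        ⟨⟨hSx u huS, hSy u huS⟩, hnotSw v hvS hv.1, hv.2, heq.symm⟩
      exact hnotS v hvS hv.1 (huS.1.tail hRuv)
    · exfalso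
      have hRvu : R v u :=
        ⟨⟨hSx v hvS, hSy v hvS⟩, hnotSw u huS hu.1, hu.2, heq⟩
      exact hnotS u huS hu.1 (hvS.1.tail hRvu)
    · exact ginj ⟨hnotSw u huS hu.1, hu.2⟩ ⟨hnotSw v hvS hv.1, hv.2⟩ heq
  · intro u hux huz
    by_cases huS : u ∈ S
    · simpa [huS] using fedge u (hSx u huS) (hSy u huS)
    · simpa [huS] using gedge u (hnotSw u huS hux) huz

/-- If `x, y, w, z ∈ X` are distinct and both `{x, y}` and `{w, z}` are exposable in a
bipartite graph `H` on `X ∪ Y`, then at least one of the cross pairs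
`{x, w}, {x, z}, {y, w}, {y, z}` is exposable. -/
theorem stmt9 {X Y : Type*} [Fintype X] [Fintype Y] [DecidableEq X] [DecidableEq Y]
    (H : Finset (X × Y)) (x y w z : X)
    (hxy : x ≠ y) (hxw : x ≠ w) (hxz : x ≠ z) (hyw : y ≠ w) (hyz : y ≠ z) (hwz : w ≠ z)
    (h1 : Exposable H x y) (h2 : Exposable H w z) :
    Exposable H x w ∨ Exposable H x z ∨ Exposable H y w ∨ Exposable H y z := by
  classical
  obtain ⟨f, finj, fedge⟩ := h1
  obtain ⟨g, ginj, gedge⟩ := h2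
  set R : X → X → Prop :=
    fun u v : X => (u ≠ x ∧ u ≠ y) ∧ v ≠ w ∧ v ≠ z ∧ g v = f u with hRdef
  by_cases hy : Relation.ReflTransGen R w y
  · -- the path reaches `y`; then it cannot also reach `x`, and we get `Exposable H y z`.
    have hx : ¬ Relation.ReflTransGen
        (fun u v : X => (u ≠ y ∧ u ≠ x) ∧ v ≠ w ∧ v ≠ z ∧ g v = f u) w x := by
      intro hx'
      have hx2 : Relation.ReflTransGen R w x :=
        Relation.ReflTransGen.mono
          (fun a b (hab : (a ≠ y ∧ a ≠ x) ∧ b ≠ w ∧ b ≠ z ∧ g b = f a) =>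
            (⟨⟨hab.1.2, hab.1.1⟩, hab.2⟩ : R a b)) w x hx'
      have runiq : Relator.RightUnique R := by
        intro a b c hab hac
        exact ginj ⟨hab.2.1, hab.2.2.1⟩ ⟨hac.2.1, hac.2.2.1⟩
          (hab.2.2.2.trans hac.2.2.2.symm)
      rcases Relation.ReflTransGen.total_of_right_unique runiq hx2 hy with h | h
      · rcases h.cases_head with h | ⟨c, hc, _⟩
        · exact hxy h
        · exact hc.1.1 rfl
      · rcases h.cases_head with h | ⟨c, hc, _⟩
        · exact hxy h.symm
        · exact hc.1.2 rfl
    refine Or.inr (Or.inr (Or.inr ?_))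
    exact exposable_aux H y x w z f g hyw
      (fun u hu v hv h => finj ⟨hu.2, hu.1⟩ ⟨hv.2, hv.1⟩ h)
      (fun u h1 h2 => fedge u h2 h1) ginj gedge hx
  · -- the path never reaches `y`: we get `Exposable H x z`.
    exact Or.inr (Or.inl (exposable_aux H x y w z f g hxw finj fedge ginj gedge hy))
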